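/- arXiv:1606.02635 — 3 statements merged into one kernel-verified Lean document; each statement's English description precedes it below -/
import Mathlib

section
/- Given nonnegative reals w_1, ..., w_n with each w_i ≤ 1 and ∑ w_i ≤ m, define S_0 = 0 and S_i = w_1 + ... + w_i, and for each task i and processor k ∈ {1,...,m} define the assigned sub-interval A_{ik} = [max(S_{i-1}, k-1), min(S_i, k)] (empty if max ≥ min). Then for each fixed task i, the intervals {A_{ik} − (k−1) : k = 1,...,m} (i.e., shifted back into [0,1], representing execution time windows within the scheduling interval) are pairwise disjoint up to measure zero. -/
open MeasureTheory

/-- For a fixed task, its wrap-around pieces, shifted back into [0,1], are pairwise disjoint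
up to measure zero. -/
theorem stmt1 (n m : ℕ) (hm : 0 < m) (w : ℕ → ℝ)
    (hw : ∀ i < n, 0 ≤ w i ∧ w i ≤ 1)
    (hsum : ∑ i ∈ Finset.range n, w i ≤ m)
    (S : ℕ → ℝ) (hS : ∀ i, S i = ∑ j ∈ Finset.range i, w j) :
    ∀ i < n, ∀ k ∈ Finset.Icc 1 m, ∀ k' ∈ Finset.Icc 1 m, k ≠ k' →
      volume
        ((Set.Icc (max (S i) ((k : ℝ) - 1) - ((k : ℝ) - 1))
                  (min (S (i + 1)) (k : ℝ) - ((k : ℝ) - 1))) ∩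
         (Set.Icc (max (S i) ((k' : ℝ) - 1) - ((k' : ℝ) - 1))
                  (min (S (i + 1)) (k' : ℝ) - ((k' : ℝ) - 1)))) = 0 := by
  intro i hi k hk k' hk' hne
  have hw1 : S (i + 1) ≤ S i + 1 := by
    rw [hS, hS, Finset.sum_range_succ]
    linarith [(hw i hi).2]
  wlog h : k < k' generalizing k k'
  · rw [Set.inter_comm]
    exact this k' hk' k hk hne.symm (by omega)
  rw [Set.Icc_inter_Icc, Real.volume_Icc]
  rw [ENNReal.ofReal_eq_zero]
  have h1 : (k : ℝ) + 1 ≤ (k' : ℝ) := by exact_mod_cast h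
  have h2 := min_le_left (S (i + 1)) (k' : ℝ)
  have h3 := le_max_left (S i) ((k : ℝ) - 1)
  have h4 := min_le_right (min (S (i + 1)) (k : ℝ) - ((k : ℝ) - 1))
      (min (S (i + 1)) (k' : ℝ) - ((k' : ℝ) - 1))
  have h5 := le_max_left (max (S i) ((k : ℝ) - 1) - ((k : ℝ) - 1))
      (max (S i) ((k' : ℝ) - 1) - ((k' : ℝ) - 1))
  linarith
end

section
/- Fix an interval index μ and suppose the fractional solution satisfies ∑_q w_i^q[μ] ≤ 1 for all i and ∑_{i,q} w_i^q[μ] ≤ m. Flatten the pairs (i,q) into a single list ordered lexicographically and apply the wrap-around construction with weights w_i^q[μ]. Then the resulting piecewise-constant binary assignment a_{ik}^q(t) on [τ_μ, τ_{μ+1}] satisfies: (a) ∑_{k,q} a_{ik}^q(t) ≤ 1 for all i and almost all t; (b) ∑_{i,q} a_{ik}^q(t) ≤ 1 for all k and almost all t; (c) ∫ ∑_k a_{ik}^q(t) dt = (τ_{μ+1}−τ_μ) w_i^q[μ] for all i, q. -/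
open MeasureTheory

private lemma clamp_diff (a b x y : ℝ) (hab : a ≤ b) (hxy : x ≤ y) :
    min (max y a) b - min (max x a) b = max (min b y - max a x) 0 := by
  rcases le_total y a with h|h <;> rcases le_total x a with h'|h' <;>
    rcases le_total y b with h2|h2 <;> rcases le_total x b with h3|h3 <;>
    simp only [min_def, max_def] <;> split_ifs <;> linarith

private lemma sum_clamp (m : ℕ) (a b : ℝ) (h0 : 0 ≤ a) (hab : a ≤ b) (hbm : b ≤ m) :
    ∑ k : Fin m, (min (max ((k:ℝ)+1) a) b - min (max (k:ℝ) a) b) = b - a := by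
  have h1 : ∑ k : Fin m, (min (max ((k:ℝ)+1) a) b - min (max (k:ℝ) a) b)
      = ∑ k ∈ Finset.range m,
        (min (max (((k+1:ℕ)):ℝ) a) b - min (max ((k:ℕ):ℝ) a) b) := by
    rw [← Fin.sum_univ_eq_sum_range]
    congr 1; funext k; push_cast; ring_nf
  rw [h1, Finset.sum_range_sub (fun j : ℕ => min (max (j:ℝ) a) b) m]
  rw [Nat.cast_zero, max_eq_left (hab.trans hbm), min_eq_right hbm,
      max_eq_right h0, min_eq_left hab]

private lemma integral_ite (A B c d : ℝ) (h1 : A ≤ c) (h2 : d ≤ B) :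
    (∫ t in A..B, if c ≤ t ∧ t < d then (1:ℝ) else 0) = max (d - c) 0 := by
  have hfe : (fun t => if c ≤ t ∧ t < d then (1:ℝ) else 0)
      = (Set.Ico c d).indicator (fun _ => 1) := by
    funext t; simp [Set.indicator_apply, Set.mem_Ico]
  rcases le_or_gt d c with h | h
  · have hz : ∀ t, (if c ≤ t ∧ t < d then (1:ℝ) else 0) = 0 := by
      intro t; rw [if_neg]; rintro ⟨ha, hb⟩; linarith
    rw [max_eq_right (by linarith)]
    simp only [hz, intervalIntegral.integral_zero]
  · rw [max_eq_left (by linarith)]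
    have hAB : A ≤ B := by linarith
    rw [intervalIntegral.integral_of_le hAB]
    rw [show (fun t => if c ≤ t ∧ t < d then (1:ℝ) else 0)
        = (Set.Ico c d).indicator (fun _ => 1) from hfe]
    rw [MeasureTheory.setIntegral_indicator measurableSet_Ico,
        MeasureTheory.setIntegral_const]
    have hvol : volume (Set.Ioc A B ∩ Set.Ico c d) = ENNReal.ofReal (d - c) := by
      apply le_antisymm
      · calc volume (Set.Ioc A B ∩ Set.Ico c d) ≤ volume (Set.Ico c d) :=
              measure_mono Set.inter_subset_right
          _ = ENNReal.ofReal (d - c) := Real.volume_Ico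
      · calc ENNReal.ofReal (d - c) = volume (Set.Ioo c d) := (Real.volume_Ioo).symm
          _ ≤ volume (Set.Ioc A B ∩ Set.Ico c d) := by
              apply measure_mono
              rintro x ⟨hx1, hx2⟩
              exact ⟨⟨by linarith, by linarith⟩, ⟨le_of_lt hx1, hx2⟩⟩
    rw [MeasureTheory.measureReal_def, hvol, ENNReal.toReal_ofReal (by linarith)]; simp

private lemma ite_integrable (A B c d : ℝ) :
    IntervalIntegrable (fun t => if c ≤ t ∧ t < d then (1:ℝ) else 0) volume A B := by
  have hfe : (fun t => if c ≤ t ∧ t < d then (1:ℝ) else 0)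
      = (Set.Ico c d).indicator (fun _ => 1) := by
    funext t; simp [Set.indicator_apply, Set.mem_Ico]
  rw [hfe]
  apply MeasureTheory.Integrable.intervalIntegrable
  rw [MeasureTheory.integrable_indicator_iff measurableSet_Ico]
  exact (MeasureTheory.integrableOn_const_iff).mpr
    (Or.inr (by rw [Real.volume_Ico]; exact ENNReal.ofReal_lt_top))

private lemma aux_lex {n ℓ : ℕ} (w : Fin n → Fin ℓ → ℝ) (hwb : ∀ i q, 0 ≤ w i q)
    (S : Fin n × Fin ℓ → ℝ)
    (hS : ∀ p, S p = ∑ p' ∈ Finset.univ.filter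
      (fun p' : Fin n × Fin ℓ => p'.1 < p.1 ∨ (p'.1 = p.1 ∧ p'.2 < p.2)), w p'.1 p'.2)
    {p p' : Fin n × Fin ℓ}
    (h : p.1 < p'.1 ∨ (p.1 = p'.1 ∧ p.2 < p'.2)) :
    S p + w p.1 p.2 ≤ S p' := by
  rw [hS p, hS p']
  have hnot : p ∉ Finset.univ.filter
      (fun z : Fin n × Fin ℓ => z.1 < p.1 ∨ (z.1 = p.1 ∧ z.2 < p.2)) := by simp
  have hsub : insert p (Finset.univ.filter
      (fun z : Fin n × Fin ℓ => z.1 < p.1 ∨ (z.1 = p.1 ∧ z.2 < p.2)))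
      ⊆ Finset.univ.filter
      (fun z : Fin n × Fin ℓ => z.1 < p'.1 ∨ (z.1 = p'.1 ∧ z.2 < p'.2)) := by
    intro z hz
    rcases Finset.mem_insert.mp hz with rfl | hz
    · simpa using h
    · simp only [Finset.mem_filter, Finset.mem_univ, true_and] at hz ⊢
      rcases hz with h1 | ⟨h1, h1'⟩ <;> rcases h with h2 | ⟨h2, h2'⟩
      · exact Or.inl (h1.trans h2)
      · exact Or.inl (h2 ▸ h1)
      · exact Or.inl (h1 ▸ h2)
      · exact Or.inr ⟨h1.trans h2, h1'.trans h2'⟩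
  have := Finset.sum_le_sum_of_subset_of_nonneg hsub
      (fun z _ _ => hwb z.1 z.2)
  rw [Finset.sum_insert hnot] at this
  linarith

private lemma aux_unique {n ℓ : ℕ} (w : Fin n → Fin ℓ → ℝ) (hwb : ∀ i q, 0 ≤ w i q)
    (S : Fin n × Fin ℓ → ℝ)
    (hS : ∀ p, S p = ∑ p' ∈ Finset.univ.filter
      (fun p' : Fin n × Fin ℓ => p'.1 < p.1 ∨ (p'.1 = p.1 ∧ p'.2 < p.2)), w p'.1 p'.2)
    {p p' : Fin n × Fin ℓ} {x : ℝ}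
    (h1 : S p ≤ x) (h2 : x < S p + w p.1 p.2)
    (h1' : S p' ≤ x) (h2' : x < S p' + w p'.1 p'.2) : p = p' := by
  by_contra hne
  have tri : (p.1 < p'.1 ∨ (p.1 = p'.1 ∧ p.2 < p'.2)) ∨
      (p'.1 < p.1 ∨ (p'.1 = p.1 ∧ p'.2 < p.2)) := by
    rcases lt_trichotomy p.1 p'.1 with h|h|h
    · exact Or.inl (Or.inl h)
    · rcases lt_trichotomy p.2 p'.2 with hq|hq|hq
      · exact Or.inl (Or.inr ⟨h, hq⟩)
      · exact absurd (Prod.ext h hq) hne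
      · exact Or.inr (Or.inr ⟨h.symm, hq⟩)
    · exact Or.inr (Or.inl h)
  rcases tri with h|h
  · have := aux_lex w hwb S hS h; linarith
  · have := aux_lex w hwb S hS h; linarith

private lemma aux_row {n ℓ : ℕ} (w : Fin n → Fin ℓ → ℝ) (hwb : ∀ i q, 0 ≤ w i q)
    (S : Fin n × Fin ℓ → ℝ)
    (hS : ∀ p, S p = ∑ p' ∈ Finset.univ.filter
      (fun p' : Fin n × Fin ℓ => p'.1 < p.1 ∨ (p'.1 = p.1 ∧ p'.2 < p.2)), w p'.1 p'.2)
    (i : Fin n) (hrow : (∑ q, w i q) ≤ 1) (q q' : Fin ℓ) :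
    S (i, q) + w i q ≤ S (i, q') + 1 := by
  set B := ∑ z ∈ Finset.univ.filter (fun z : Fin n × Fin ℓ => z.1 < i), w z.1 z.2 with hB
  have h1 : B ≤ S (i, q') := by
    rw [hS]
    apply Finset.sum_le_sum_of_subset_of_nonneg
    · intro z hz
      simp only [Finset.mem_filter, Finset.mem_univ, true_and] at hz ⊢
      exact Or.inl hz
    · exact fun z _ _ => hwb z.1 z.2
  have heqrow : ∑ z ∈ Finset.univ.filter (fun z : Fin n × Fin ℓ => z.1 = i), w z.1 z.2
      = ∑ r, w i r := by
    rw [Finset.sum_filter, Fintype.sum_prod_type]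
    have hsw : ∀ i' : Fin n, (∑ r : Fin ℓ, if i' = i then w i' r else 0)
        = if i' = i then ∑ r : Fin ℓ, w i' r else 0 := by
      intro i'; split_ifs <;> simp
    simp only [hsw, Finset.sum_ite_eq' Finset.univ i (fun i' => ∑ r : Fin ℓ, w i' r),
      Finset.mem_univ, if_true]
  have hdisj : Disjoint (Finset.univ.filter (fun z : Fin n × Fin ℓ => z.1 < i))
      (Finset.univ.filter (fun z : Fin n × Fin ℓ => z.1 = i)) := by
    rw [Finset.disjoint_left]
    intro z hz hz'
    simp only [Finset.mem_filter, Finset.mem_univ, true_and] at hz hz'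
    exact absurd hz' (ne_of_lt hz)
  have hT : ∑ z ∈ Finset.univ.filter
      (fun z : Fin n × Fin ℓ => z.1 < i ∨ z.1 = i), w z.1 z.2 = B + ∑ r, w i r := by
    rw [Finset.filter_or, Finset.sum_union hdisj, heqrow]
  have hnot : ((i, q) : Fin n × Fin ℓ) ∉ Finset.univ.filter
      (fun z : Fin n × Fin ℓ => z.1 < (i,q).1 ∨ (z.1 = (i,q).1 ∧ z.2 < (i,q).2)) := by simp
  have hsub : insert ((i,q) : Fin n × Fin ℓ) (Finset.univ.filter
      (fun z : Fin n × Fin ℓ => z.1 < (i,q).1 ∨ (z.1 = (i,q).1 ∧ z.2 < (i,q).2)))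
      ⊆ Finset.univ.filter (fun z : Fin n × Fin ℓ => z.1 < i ∨ z.1 = i) := by
    intro z hz
    rcases Finset.mem_insert.mp hz with rfl | hz
    · simp
    · simp only [Finset.mem_filter, Finset.mem_univ, true_and] at hz ⊢
      rcases hz with h | ⟨h, _⟩
      · exact Or.inl h
      · exact Or.inr h
  have h2 : S (i, q) + w i q ≤ B + ∑ r, w i r := by
    rw [hS, ← hT]
    have := Finset.sum_le_sum_of_subset_of_nonneg hsub (fun z _ _ => hwb z.1 z.2)
    rw [Finset.sum_insert hnot] at this
    linarith
  linarith

private lemma count_le_one {α β : Type*} [Fintype α] [Fintype β] (C : α → β → Prop)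
    [∀ a b, Decidable (C a b)]
    (h : ∀ a b a' b', C a b → C a' b' → (a, b) = (a', b')) :
    (∑ a, ∑ b, if C a b then (1:ℝ) else 0) ≤ 1 := by
  classical
  have h1 : (∑ a, ∑ b, if C a b then (1:ℝ) else 0)
      = ∑ p : α × β, if C p.1 p.2 then (1:ℝ) else 0 :=
    (Fintype.sum_prod_type (fun p : α × β => if C p.1 p.2 then (1:ℝ) else 0)).symm
  rw [h1, Finset.sum_boole]
  have hcard : (Finset.univ.filter (fun p : α × β => C p.1 p.2)).card ≤ 1 := by
    apply Finset.card_le_one.mpr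
    intro p hp p' hp'
    simp only [Finset.mem_filter] at hp hp'
    have := h p.1 p.2 p'.1 p'.2 hp.2 hp'.2
    simpa using this
  exact_mod_cast hcard

/-- McNaughton's wrap-around construction on a single event interval: flattening the pairs
(task, speed level) lexicographically and cutting the concatenated workload line at the
integers yields a feasible binary schedule whose per-(task, speed) execution times match the
fractional solution. Chunk k (0-indexed) of the workload line is assigned to processor k. -/
theorem stmt16 (n ℓ m : ℕ) (τμ τμ1 : ℝ) (hτ : τμ < τμ1)
    (w : Fin n → Fin ℓ → ℝ)
    (hwb : ∀ i q, 0 ≤ w i q)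
    (hw1 : ∀ i, (∑ q, w i q) ≤ 1)
    (hwm : (∑ i, ∑ q, w i q) ≤ (m : ℝ))
    (S : Fin n × Fin ℓ → ℝ)
    (hS : ∀ p, S p = ∑ p' ∈ Finset.univ.filter
      (fun p' : Fin n × Fin ℓ => p'.1 < p.1 ∨ (p'.1 = p.1 ∧ p'.2 < p.2)), w p'.1 p'.2)
    (a : Fin n → Fin m → Fin ℓ → ℝ → ℝ)
    (ha : ∀ i k q t, a i k q t =
      if τμ + (max (S (i, q)) (k : ℝ) - (k : ℝ)) * (τμ1 - τμ) ≤ t ∧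
         t < τμ + (min (S (i, q) + w i q) ((k : ℝ) + 1) - (k : ℝ)) * (τμ1 - τμ)
      then 1 else 0) :
    (∀ i, ∀ᵐ t ∂volume, t ∈ Set.Icc τμ τμ1 → (∑ k, ∑ q, a i k q t) ≤ 1) ∧
    (∀ k, ∀ᵐ t ∂volume, t ∈ Set.Icc τμ τμ1 → (∑ i, ∑ q, a i k q t) ≤ 1) ∧
    (∀ i q, (∫ t in τμ..τμ1, ∑ k, a i k q t) = (τμ1 - τμ) * w i q) := by
  have hΔ : (0:ℝ) < τμ1 - τμ := by linarith
  -- extracting the normalized position from the scheduling condition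
  have cond : ∀ (i : Fin n) (k : Fin m) (q : Fin ℓ) (t : ℝ),
      (τμ + (max (S (i, q)) (k : ℝ) - (k : ℝ)) * (τμ1 - τμ) ≤ t ∧
       t < τμ + (min (S (i, q) + w i q) ((k : ℝ) + 1) - (k : ℝ)) * (τμ1 - τμ)) →
      S (i, q) ≤ (t - τμ)/(τμ1 - τμ) + k ∧
      (t - τμ)/(τμ1 - τμ) + k < S (i, q) + w i q ∧
      (0:ℝ) ≤ (t - τμ)/(τμ1 - τμ) ∧ (t - τμ)/(τμ1 - τμ) < 1 := by
    rintro i k q t ⟨h1, h2⟩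
    have e1 : max (S (i, q)) (k:ℝ) - k ≤ (t - τμ)/(τμ1 - τμ) := by
      rw [le_div_iff₀ hΔ]; linarith
    have e2 : (t - τμ)/(τμ1 - τμ) < min (S (i, q) + w i q) ((k:ℝ)+1) - k := by
      rw [div_lt_iff₀ hΔ]; linarith
    have m1 := le_max_left (S (i, q)) (k:ℝ)
    have m2 := le_max_right (S (i, q)) (k:ℝ)
    have m3 := min_le_left (S (i, q) + w i q) ((k:ℝ)+1)
    have m4 := min_le_right (S (i, q) + w i q) ((k:ℝ)+1)
    exact ⟨by linarith, by linarith, by linarith, by linarith⟩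
  refine ⟨?_, ?_, ?_⟩
  · -- (a) each task runs on at most one (processor, speed) at any time
    intro i
    refine Filter.Eventually.of_forall (fun t _ => ?_)
    simp only [ha]
    apply count_le_one
    intro k q k' q' hc hc'
    obtain ⟨x1, x2, u0, _⟩ := cond i k q t hc
    obtain ⟨y1, y2, _, _⟩ := cond i k' q' t hc'
    have r1 := aux_row w hwb S hS i (hw1 i) q q'
    have r2 := aux_row w hwb S hS i (hw1 i) q' q
    have ck : ((k:ℕ):ℝ) < ((k':ℕ):ℝ) + 1 := by linarith
    have ck' : ((k':ℕ):ℝ) < ((k:ℕ):ℝ) + 1 := by linarith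
    have hk : k = k' := by
      have c1 : (k:ℕ) < (k':ℕ) + 1 := by exact_mod_cast ck
      have c2 : (k':ℕ) < (k:ℕ) + 1 := by exact_mod_cast ck'
      exact Fin.ext (by omega)
    subst hk
    have hq : ((i, q) : Fin n × Fin ℓ) = (i, q') :=
      aux_unique w hwb S hS x1 x2 y1 y2
    have : q = q' := (Prod.ext_iff.mp hq).2
    rw [this]
  · -- (b) each processor runs at most one (task, speed) at any time
    intro k
    refine Filter.Eventually.of_forall (fun t _ => ?_)
    simp only [ha]
    apply count_le_one
    intro i q i' q' hc hc'
    obtain ⟨x1, x2, _, _⟩ := cond i k q t hc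
    obtain ⟨y1, y2, _, _⟩ := cond i' k q' t hc'
    exact aux_unique w hwb S hS x1 x2 y1 y2
  · -- (c) the execution times match the fractional solution
    intro i q
    have hS0 : 0 ≤ S (i, q) := by
      rw [hS]; exact Finset.sum_nonneg fun z _ => hwb z.1 z.2
    have hSm : S (i, q) + w i q ≤ (m:ℝ) := by
      have hnot : ((i, q) : Fin n × Fin ℓ) ∉ Finset.univ.filter
          (fun z : Fin n × Fin ℓ =>
            z.1 < (i,q).1 ∨ (z.1 = (i,q).1 ∧ z.2 < (i,q).2)) := by simp
      have h1 : S (i, q) + w i q ≤ ∑ p : Fin n × Fin ℓ, w p.1 p.2 := by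
        rw [hS]
        have := Finset.sum_le_sum_of_subset_of_nonneg
          (Finset.subset_univ (insert ((i, q) : Fin n × Fin ℓ)
            (Finset.univ.filter (fun z : Fin n × Fin ℓ =>
              z.1 < (i,q).1 ∨ (z.1 = (i,q).1 ∧ z.2 < (i,q).2)))))
          (fun z _ _ => hwb z.1 z.2)
        rw [Finset.sum_insert hnot] at this
        linarith
      have h2 : (∑ p : Fin n × Fin ℓ, w p.1 p.2) = ∑ i', ∑ q', w i' q' :=
        Fintype.sum_prod_type _
      linarith
    have hint : ∀ k ∈ (Finset.univ : Finset (Fin m)),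
        IntervalIntegrable (fun t => a i k q t) volume τμ τμ1 := by
      intro k _
      have hfk : (fun t => a i k q t) = fun t =>
          if τμ + (max (S (i, q)) (k : ℝ) - (k : ℝ)) * (τμ1 - τμ) ≤ t ∧
             t < τμ + (min (S (i, q) + w i q) ((k : ℝ) + 1) - (k : ℝ)) * (τμ1 - τμ)
          then (1:ℝ) else 0 := funext fun t => ha i k q t
      rw [hfk]
      exact ite_integrable _ _ _ _
    rw [intervalIntegral.integral_finset_sum hint]
    have hper : ∀ k : Fin m, (∫ t in τμ..τμ1, a i k q t)
        = (τμ1 - τμ) * (min (max ((k:ℝ)+1) (S (i, q))) (S (i, q) + w i q)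
            - min (max ((k:ℝ)) (S (i, q))) (S (i, q) + w i q)) := by
      intro k
      simp only [ha]
      have hc1 : τμ ≤ τμ + (max (S (i, q)) (k:ℝ) - (k:ℝ)) * (τμ1 - τμ) := by
        have := le_max_right (S (i, q)) (k:ℝ)
        nlinarith
      have hc2 : τμ + (min (S (i, q) + w i q) ((k:ℝ)+1) - (k:ℝ)) * (τμ1 - τμ) ≤ τμ1 := by
        have := min_le_right (S (i, q) + w i q) ((k:ℝ)+1)
        nlinarith
      rw [integral_ite _ _ _ _ hc1 hc2]
      have hdc : (τμ + (min (S (i, q) + w i q) ((k:ℝ)+1) - (k:ℝ)) * (τμ1 - τμ))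
          - (τμ + (max (S (i, q)) (k:ℝ) - (k:ℝ)) * (τμ1 - τμ))
          = (τμ1 - τμ) * (min (S (i, q) + w i q) ((k:ℝ)+1) - max (S (i, q)) (k:ℝ)) := by
        ring
      rw [hdc, clamp_diff (S (i, q)) (S (i, q) + w i q) (k:ℝ) ((k:ℝ)+1)
        (by linarith [hwb i q]) (by linarith)]
      rw [mul_max_of_nonneg _ _ hΔ.le, mul_zero]
    simp only [hper]
    rw [← Finset.mul_sum,
      sum_clamp m (S (i, q)) (S (i, q) + w i q) hS0 (by linarith [hwb i q]) hSm]
    ring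
end

section
/- The optimal values of the continuous-time binary scheduling problem (minimize ∫∑_{i,k,q} a_{ik}^q(t) c^q dt over binary measurable assignments satisfying the flow dynamics, boundary conditions, and the per-task and per-processor exclusivity constraints) and the discrete-time LP (minimize ∑_{μ,i,q}(τ_{μ+1}−τ_μ) w_i^q[μ] c^q over the LP-DVFS feasible set) are equal, provided the event times τ_μ include all arrival times and deadlines. -/
open MeasureTheory Finset Set


lemma aux_II (f : ℝ → ℝ) (hm : Measurable f) (C : ℝ) (hb : ∀ t, |f t| ≤ C)
    (u v : ℝ) : IntervalIntegrable f volume u v := by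
  rw [intervalIntegrable_iff]
  refine Integrable.mono' (g := fun _ => C) (integrableOn_const measure_Ioc_lt_top.ne)
    hm.aestronglyMeasurable (Filter.Eventually.of_forall fun t => ?_)
  simpa using hb t

lemma aux_ind (A B u v : ℝ) (huv : u ≤ v) :
    (∫ t in u..v, (Set.Ico A B).indicator (fun _ => (1:ℝ)) t) =
      max 0 (min B v - max A u) := by
  rw [intervalIntegral.integral_of_le huv,
    MeasureTheory.setIntegral_congr_ae measurableSet_Ioc
      (g := (Set.Ioc A B).indicator (fun _ => (1:ℝ))) ?_,
    MeasureTheory.setIntegral_indicator measurableSet_Ioc]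
  · rw [setIntegral_const, smul_eq_mul, mul_one, Set.Ioc_inter_Ioc, measureReal_def, Real.volume_Ioc,
      ENNReal.toReal_ofReal']
    rw [max_comm, min_comm v B, max_comm u A]
  · filter_upwards [Ico_ae_eq_Ioc (a := A) (b := B)] with t ht _
    have h2 : (t ∈ Set.Ico A B) = (t ∈ Set.Ioc A B) := ht
    by_cases h1 : t ∈ Set.Ico A B
    · rw [Set.indicator_of_mem h1, Set.indicator_of_mem (h2 ▸ h1)]
    · rw [Set.indicator_of_notMem h1, Set.indicator_of_notMem (fun hh => h1 (h2 ▸ hh))]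


lemma aux_II_sum {ι : Type*} (sfin : Finset ι) (f : ι → ℝ → ℝ) {u v : ℝ}
    (h : ∀ i ∈ sfin, IntervalIntegrable (f i) volume u v) :
    IntervalIntegrable (fun t => ∑ i ∈ sfin, f i t) volume u v := by
  have h2 := IntervalIntegrable.sum sfin h
  have heq : (fun t => ∑ i ∈ sfin, f i t) = ∑ i ∈ sfin, f i := by
    ext t; simp [Finset.sum_apply]
  rw [heq]
  exact h2

lemma aux_tele (A B u v : ℝ) (hAB : A ≤ B) (huv : u ≤ v) :
    max 0 (min B v - max A u) = min B (max A v) - min B (max A u) := by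
  simp only [min_def, max_def]
  split_ifs <;> linarith

lemma aux_sum_pieces (m : ℕ) (Δ A B : ℝ) (hΔ : 0 ≤ Δ) (hA : 0 ≤ A) (hAB : A ≤ B)
    (hB : B ≤ m * Δ) :
    ∑ k : Fin m, max 0 (min B ((k + 1 : ℕ) * Δ) - max A ((k : ℕ) * Δ)) = B - A := by
  have key : ∀ k : ℕ, max 0 (min B ((k + 1 : ℕ) * Δ) - max A ((k : ℕ) * Δ))
      = min B (max A ((k+1 : ℕ) * Δ)) - min B (max A ((k : ℕ) * Δ)) := by
    intro k
    refine aux_tele A B _ _ hAB ?_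
    have : (k : ℝ) * Δ ≤ (k + 1 : ℕ) * Δ := by
      apply mul_le_mul_of_nonneg_right _ hΔ
      push_cast; linarith
    exact this
  calc ∑ k : Fin m, max 0 (min B ((k + 1 : ℕ) * Δ) - max A ((k : ℕ) * Δ))
      = ∑ k ∈ Finset.range m, (min B (max A ((k+1 : ℕ) * Δ)) - min B (max A ((k : ℕ) * Δ))) := by
        rw [Fin.sum_univ_eq_sum_range (fun k => max 0 (min B ((k + 1:ℕ) * Δ) - max A ((k:ℕ) * Δ)))]
        exact Finset.sum_congr rfl fun k _ => key k
    _ = min B (max A ((m : ℕ) * Δ)) - min B (max A ((0 : ℕ) * Δ)) :=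
        Finset.sum_range_sub (fun k => min B (max A ((k : ℕ) * Δ))) m
    _ = B - A := by
        rw [Nat.cast_zero, zero_mul, max_eq_left hA, min_eq_right hAB,
          max_eq_right (hAB.trans hB), min_eq_left hB]

lemma aux_sum_binary {ι : Type*} [Fintype ι] (f : ι → ℝ) (hf : ∀ j, f j = 0 ∨ f j = 1)
    (h : ∀ j j', j ≠ j' → f j = 0 ∨ f j' = 0) :
    (∑ j, f j) = 0 ∨ (∑ j, f j) = 1 := by
  by_cases hex : ∃ j, f j = 1
  · obtain ⟨j, hj⟩ := hex
    right
    rw [Finset.sum_eq_single_of_mem j (Finset.mem_univ j) ?_, hj]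
    intro j' _ hj'
    rcases h j' j hj' with h0 | h0
    · exact h0
    · rw [h0] at hj; norm_num at hj
  · left
    push_neg at hex
    exact Finset.sum_eq_zero fun j _ => (hf j).resolve_right (hex j)

lemma aux_sum_binary_le_one {ι : Type*} [Fintype ι] (f : ι → ℝ) (hf : ∀ j, f j = 0 ∨ f j = 1)
    (h : ∀ j j', j ≠ j' → f j = 0 ∨ f j' = 0) : (∑ j, f j) ≤ 1 := by
  rcases aux_sum_binary f hf h with h0 | h0 <;> rw [h0] <;> norm_num

lemma aux_shift (base Δ A B kk : ℝ) :
    max 0 (min (base + Δ) (base + B - kk) - max base (base + A - kk)) =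
    max 0 (min B (kk + Δ) - max A kk) := by
  simp only [min_def, max_def]
  split_ifs <;> linarith


lemma aux_grid {N : ℕ} (τ : Fin (N+1) → ℝ) (f : ℝ → ℝ)
    (hf : ∀ u v, IntervalIntegrable f volume u v) (p r : Fin (N+1)) (hpr : (p:ℕ) ≤ (r:ℕ)) :
    (∑ μ ∈ Finset.univ.filter (fun μ : Fin N => (p:ℕ) ≤ (μ:ℕ) ∧ (μ:ℕ) < (r:ℕ)),
      ∫ t in τ μ.castSucc..τ μ.succ, f t) = ∫ t in (τ p)..(τ r), f t := by
  set g : ℕ → ℝ := fun j => τ ⟨min j N, Nat.lt_succ_of_le (min_le_right _ _)⟩ with hg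
  have hgj : ∀ (μ : Fin (N+1)), g (μ:ℕ) = τ μ := by
    intro μ
    simp only [hg]
    congr 1
    exact Fin.ext (by simp [Nat.lt_succ_iff.1 μ.isLt])
  have key : (∑ j ∈ Finset.Ico (p:ℕ) (r:ℕ), ∫ t in (g j)..(g (j+1)), f t)
      = ∫ t in (g (p:ℕ))..(g (r:ℕ)), f t :=
    intervalIntegral.sum_integral_adjacent_intervals_Ico hpr (fun k _ => hf _ _)
  rw [hgj, hgj] at key
  rw [← key]
  have hΦ : ∀ μ : Fin N, (if ((p:ℕ) ≤ (μ:ℕ) ∧ (μ:ℕ) < (r:ℕ)) then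
      (∫ t in τ μ.castSucc..τ μ.succ, f t) else 0)
      = (fun j : ℕ => if ((p:ℕ) ≤ j ∧ j < (r:ℕ)) ∧ j < N then
          (∫ t in (g j)..(g (j+1)), f t) else 0) (μ:ℕ) := by
    intro μ
    simp only [μ.isLt, and_true]
    have h1 : τ μ.castSucc = g (μ:ℕ) := by
      simp only [hg]; congr 1; exact Fin.ext (by simp [Fin.coe_castSucc, le_of_lt μ.isLt])
    have h2 : τ μ.succ = g ((μ:ℕ)+1) := by
      simp only [hg]; congr 1; exact Fin.ext (by simp [Fin.val_succ, Nat.succ_le_of_lt μ.isLt])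
    rw [h1, h2]
  rw [Finset.sum_filter]
  rw [Finset.sum_congr rfl (fun μ _ => hΦ μ)]
  rw [Fin.sum_univ_eq_sum_range (fun j => if ((p:ℕ) ≤ j ∧ j < (r:ℕ)) ∧ j < N then
          (∫ t in (g j)..(g (j+1)), f t) else 0) N]
  rw [← Finset.sum_filter]
  have hset : Finset.filter (fun j => ((p:ℕ) ≤ j ∧ j < (r:ℕ)) ∧ j < N) (Finset.range N)
      = Finset.Ico (p:ℕ) (r:ℕ) := by
    ext j
    simp only [Finset.mem_filter, Finset.mem_range, Finset.mem_Ico]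
    have := r.isLt
    omega
  rw [hset]


section DirB
variable {N n m ℓ : ℕ} {τ : Fin (N + 1) → ℝ} {s : Fin ℓ → ℝ} {c : Fin ℓ → ℝ}
  {xbar : Fin n → ℝ} {b e : Fin n → Fin (N + 1)}

-- cumulative-start ordering lemmas, for d : Fin n → Fin ℓ → ℝ  (d for a fixed interval)
variable (d : Fin n → Fin ℓ → ℝ)

def Scum (i : Fin n) (q : Fin ℓ) : ℝ :=
  (∑ i' ∈ Finset.univ.filter (fun i' => i' < i), ∑ q', d i' q') +
    ∑ q' ∈ Finset.univ.filter (fun q' => q' < q), d i q'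

def Tcum (i : Fin n) : ℝ := ∑ i' ∈ Finset.univ.filter (fun i' => i' < i), ∑ q', d i' q'

lemma Scum_nonneg (hd : ∀ i q, 0 ≤ d i q) (i : Fin n) (q : Fin ℓ) : 0 ≤ Scum d i q :=
  add_nonneg (Finset.sum_nonneg fun _ _ => Finset.sum_nonneg fun _ _ => hd _ _)
    (Finset.sum_nonneg fun _ _ => hd _ _)

lemma Tcum_le_Scum (i : Fin n) (q : Fin ℓ) (hd : ∀ i q, 0 ≤ d i q) :
    Tcum d i ≤ Scum d i q :=
  le_add_of_nonneg_right (Finset.sum_nonneg fun _ _ => hd _ _)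

lemma Scum_add_le (i : Fin n) (q : Fin ℓ) (hd : ∀ i q, 0 ≤ d i q) :
    Scum d i q + d i q ≤ Tcum d i + ∑ q', d i q' := by
  unfold Scum Tcum
  rw [add_assoc]
  refine add_le_add (le_refl _) ?_
  rw [add_comm, ← Finset.sum_insert (by simp : q ∉ Finset.univ.filter (fun q' => q' < q))]
  exact Finset.sum_le_sum_of_subset_of_nonneg (Finset.subset_univ _) fun q' _ _ => hd _ _

lemma Scum_mono_q {q q' : Fin ℓ} (i : Fin n) (hqq : q < q') (hd : ∀ i q, 0 ≤ d i q) :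
    Scum d i q + d i q ≤ Scum d i q' := by
  unfold Scum
  rw [add_assoc]
  refine add_le_add (le_refl _) ?_
  rw [add_comm, ← Finset.sum_insert (by simp : q ∉ Finset.univ.filter (fun q'' => q'' < q))]
  refine Finset.sum_le_sum_of_subset_of_nonneg ?_ fun q'' _ _ => hd _ _
  intro q'' hq''
  simp only [Finset.mem_insert, Finset.mem_filter, Finset.mem_univ, true_and] at hq'' ⊢
  rcases hq'' with rfl | hq'' <;> [exact hqq; exact hq''.trans hqq]

lemma Tcum_mono {i i' : Fin n} (hii : i < i') (hd : ∀ i q, 0 ≤ d i q) :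
    Tcum d i + ∑ q', d i q' ≤ Tcum d i' := by
  unfold Tcum
  rw [add_comm, ← Finset.sum_insert (f := fun i'' => ∑ q', d i'' q')
    (by simp : i ∉ Finset.univ.filter (fun i'' => i'' < i))]
  refine Finset.sum_le_sum_of_subset_of_nonneg ?_
    fun i'' _ _ => Finset.sum_nonneg fun q' _ => hd _ _
  intro i'' hi''
  simp only [Finset.mem_insert, Finset.mem_filter, Finset.mem_univ, true_and] at hi'' ⊢
  rcases hi'' with rfl | hi'' <;> [exact hii; exact hi''.trans hii]

lemma Scum_mono_i {i i' : Fin n} (q q' : Fin ℓ) (hii : i < i') (hd : ∀ i q, 0 ≤ d i q) :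
    Scum d i q + d i q ≤ Scum d i' q' :=
  ((Scum_add_le d i q hd).trans (Tcum_mono d hii hd)).trans (Tcum_le_Scum d i' q' hd)

lemma Scum_add_le_total (i : Fin n) (q : Fin ℓ) (hd : ∀ i q, 0 ≤ d i q) :
    Scum d i q + d i q ≤ ∑ i', ∑ q', d i' q' := by
  refine (Scum_add_le d i q hd).trans ?_
  unfold Tcum
  rw [add_comm, ← Finset.sum_insert (f := fun i'' => ∑ q', d i'' q')
    (by simp : i ∉ Finset.univ.filter (fun i'' => i'' < i))]
  refine Finset.sum_le_sum_of_subset_of_nonneg (Finset.subset_univ _)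
    fun i'' _ _ => Finset.sum_nonneg fun q' _ => hd _ _

-- two pairs both containing a common point is impossible
lemma Scum_disjoint {i i' : Fin n} {q q' : Fin ℓ} (hne : ¬(i = i' ∧ q = q'))
    (hd : ∀ i q, 0 ≤ d i q) {p : ℝ}
    (h1 : Scum d i q ≤ p) (h2 : p < Scum d i q + d i q)
    (h3 : Scum d i' q' ≤ p) (h4 : p < Scum d i' q' + d i' q') : False := by
  rcases lt_trichotomy i i' with hii | rfl | hii
  · exact absurd h3 (not_le.2 (h2.trans_le (Scum_mono_i d q q' hii hd)))
  · rcases lt_trichotomy q q' with hqq | rfl | hqq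
    · exact absurd h3 (not_le.2 (h2.trans_le (Scum_mono_q d i hqq hd)))
    · exact hne ⟨rfl, rfl⟩
    · exact absurd h1 (not_le.2 (h4.trans_le (Scum_mono_q d i hqq hd)))
  · exact absurd h1 (not_le.2 (h4.trans_le (Scum_mono_i d q' q hii hd)))

end DirB

lemma dirA {N n m ℓ : ℕ} {τ : Fin (N + 1) → ℝ} (hτ : StrictMono τ)
    {s : Fin ℓ → ℝ} (hs : ∀ q, 0 < s q)
    {c : Fin ℓ → ℝ}
    {xbar : Fin n → ℝ}
    {b e : Fin n → Fin (N + 1)} (hbe : ∀ i, (b i : ℕ) < e i)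
    {v : ℝ}
    (h : ∃ (a : Fin n → Fin m → Fin ℓ → ℝ → ℝ) (x : Fin n → ℝ → ℝ),
      (∀ i k q, Measurable (a i k q)) ∧
      (∀ i k q t, a i k q t = 0 ∨ a i k q t = 1) ∧
      (∀ i k q t, (t < τ (b i) ∨ τ (e i) ≤ t) → a i k q t = 0) ∧
      (∀ i t, (∑ k, ∑ q, a i k q t) ≤ 1) ∧
      (∀ k t, (∑ i, ∑ q, a i k q t) ≤ 1) ∧
      (∀ i, IntervalIntegrable (fun u => ∑ k, ∑ q, s q * a i k q u) volume
        (τ (b i)) (τ (e i))) ∧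
      (∀ i t, x i t = xbar i - ∫ u in τ (b i)..t, ∑ k, ∑ q, s q * a i k q u) ∧
      (∀ i, x i (τ (e i)) = 0) ∧
      IntervalIntegrable (fun t => ∑ i, ∑ k, ∑ q, a i k q t * c q) volume
        (τ 0) (τ (Fin.last N)) ∧
      v = ∫ t in (τ 0)..(τ (Fin.last N)), ∑ i, ∑ k, ∑ q, a i k q t * c q) :
    (∃ (ξ : Fin n → Fin (N + 1) → ℝ) (w : Fin n → Fin ℓ → Fin N → ℝ),
      (∀ i, ξ i (b i) = xbar i) ∧
      (∀ i (μ : Fin (N + 1)), ¬((b i : ℕ) ≤ μ ∧ (μ : ℕ) < e i) → ξ i μ = 0) ∧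
      (∀ i (μ : Fin N), (b i : ℕ) ≤ μ → (μ : ℕ) < e i →
        ξ i μ.succ = ξ i μ.castSucc - (τ μ.succ - τ μ.castSucc) * ∑ q, s q * w i q μ) ∧
      (∀ i (μ : Fin N), (∑ q, w i q μ) ≤ 1) ∧
      (∀ μ : Fin N, (∑ i, ∑ q, w i q μ) ≤ (m : ℝ)) ∧
      (∀ i q (μ : Fin N), 0 ≤ w i q μ ∧ w i q μ ≤ 1) ∧
      v = ∑ μ : Fin N, ∑ i, ∑ q, (τ μ.succ - τ μ.castSucc) * w i q μ * c q) := by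
  obtain ⟨a, x, hmeas, hbin, hsupp, htask, hproc, hinteg, hx, hterm, hcostint, hval⟩ := h
  have hΔ : ∀ μ : Fin N, 0 < τ μ.succ - τ μ.castSucc :=
    fun μ => sub_pos.2 (hτ Fin.castSucc_lt_succ)
  have hle : ∀ μ : Fin N, τ μ.castSucc ≤ τ μ.succ := fun μ => (sub_pos.1 (hΔ μ)).le
  have hnn : ∀ i k q t, 0 ≤ a i k q t := by
    intro i k q t; rcases hbin i k q t with h0 | h0 <;> rw [h0] <;> norm_num
  have habs : ∀ i k q t, |a i k q t| ≤ 1 := by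
    intro i k q t; rcases hbin i k q t with h0 | h0 <;> rw [h0] <;> norm_num
  have hIIa : ∀ i k q u v, IntervalIntegrable (a i k q) volume u v :=
    fun i k q u v => aux_II _ (hmeas i k q) 1 (habs i k q) u v
  have hIIsum : ∀ i q u v, IntervalIntegrable (fun t => ∑ k, a i k q t) volume u v :=
    fun i q u v => aux_II_sum _ _ (fun k _ => hIIa i k q u v)
  -- the averaged workloads
  set w : Fin n → Fin ℓ → Fin N → ℝ := fun i q μ =>
    (∫ t in τ μ.castSucc..τ μ.succ, ∑ k, a i k q t) / (τ μ.succ - τ μ.castSucc) with hw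
  have hint_q : ∀ i q (μ : Fin N), (∫ t in τ μ.castSucc..τ μ.succ, ∑ k, a i k q t)
      = (τ μ.succ - τ μ.castSucc) * w i q μ := by
    intro i q μ
    rw [hw]
    rw [mul_div_cancel₀ _ (hΔ μ).ne']
  set ξ : Fin n → Fin (N + 1) → ℝ := fun i μ =>
    if (b i : ℕ) ≤ (μ:ℕ) ∧ (μ : ℕ) < (e i : ℕ) then x i (τ μ) else 0 with hξ
  refine ⟨ξ, w, ?_, ?_, ?_, ?_, ?_, ?_, ?_⟩
  · -- initial condition
    intro i
    simp only [hξ]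
    split_ifs with hcond
    · rw [hx i (τ (b i)), intervalIntegral.integral_same, sub_zero]
    · exact absurd ⟨le_refl _, hbe i⟩ hcond
  · -- outside window
    intro i μ hμ
    simp only [hξ]
    exact if_neg hμ
  · -- recursion
    intro i μ hbμ heμ
    have hξc : ξ i μ.castSucc = x i (τ μ.castSucc) := by
      simp only [hξ]
      split_ifs with hcond
      · rfl
      · exfalso
        simp only [Fin.coe_castSucc, not_and, not_lt] at hcond
        omega
    have hξs : ξ i μ.succ = x i (τ μ.succ) := by
      by_cases hcase : (μ:ℕ) + 1 < (e i : ℕ)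
      · simp only [hξ]
        split_ifs with hcond
        · rfl
        · exfalso
          simp only [Fin.val_succ, not_and, not_lt] at hcond
          omega
      · have heq2 : (μ:ℕ) + 1 = (e i : ℕ) := by omega
        have hei : μ.succ = e i := Fin.ext (by simpa [Fin.val_succ] using heq2)
        simp only [hξ]
        split_ifs with hcond
        · exfalso
          simp only [Fin.val_succ, not_and, not_lt] at hcond
          omega
        · rw [hei]
          exact (hterm i).symm
    rw [hξc, hξs]
    have hGm : Measurable (fun u => ∑ k, ∑ q, s q * a i k q u) := by
      apply Finset.measurable_sum
      intro k _
      apply Finset.measurable_sum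
      intro q _
      exact (hmeas i k q).const_mul _
    have hGb : ∀ t, |∑ k, ∑ q, s q * a i k q t| ≤ ∑ _k : Fin m, ∑ q, |s q| := by
      intro t
      refine (Finset.abs_sum_le_sum_abs _ _).trans (Finset.sum_le_sum fun k _ => ?_)
      refine (Finset.abs_sum_le_sum_abs _ _).trans (Finset.sum_le_sum fun q _ => ?_)
      rw [abs_mul]
      nlinarith [abs_nonneg (s q), habs i k q t, abs_nonneg (a i k q t)]
    have hGI : ∀ u v, IntervalIntegrable (fun u => ∑ k, ∑ q, s q * a i k q u) volume u v :=
      fun u v => aux_II _ hGm _ hGb u v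
    have hadd := intervalIntegral.integral_add_adjacent_intervals
      (hGI (τ (b i)) (τ μ.castSucc)) (hGI (τ μ.castSucc) (τ μ.succ))
    have hseg : (∫ u in τ μ.castSucc..τ μ.succ, ∑ k, ∑ q, s q * a i k q u)
        = (τ μ.succ - τ μ.castSucc) * ∑ q, s q * w i q μ := by
      have hpt : ∀ t, (∑ k, ∑ q, s q * a i k q t) = ∑ q, s q * ∑ k, a i k q t := by
        intro t
        rw [Finset.sum_comm]
        exact Finset.sum_congr rfl fun q _ => (Finset.mul_sum _ _ _).symm
      rw [intervalIntegral.integral_congr (fun t _ => hpt t)]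
      rw [intervalIntegral.integral_finset_sum (fun q _ => (hIIsum i q _ _).const_mul (s q))]
      rw [Finset.mul_sum]
      refine Finset.sum_congr rfl fun q _ => ?_
      rw [intervalIntegral.integral_const_mul, hint_q i q μ]
      ring
    rw [hx i (τ μ.succ), hx i (τ μ.castSucc), ← hadd, hseg]
    ring
  · -- per-task constraint
    intro i μ
    have hrw : (∑ q, w i q μ) = (∫ t in τ μ.castSucc..τ μ.succ, ∑ q, ∑ k, a i k q t)
        / (τ μ.succ - τ μ.castSucc) := by
      rw [intervalIntegral.integral_finset_sum (fun q _ => hIIsum i q _ _), hw,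
        Finset.sum_div]
    rw [hrw, div_le_one (hΔ μ)]
    calc (∫ t in τ μ.castSucc..τ μ.succ, ∑ q, ∑ k, a i k q t)
        ≤ ∫ _t in τ μ.castSucc..τ μ.succ, (1:ℝ) := by
          refine intervalIntegral.integral_mono_on (hle μ)
            (aux_II_sum _ _ (fun q _ => hIIsum i q _ _)) intervalIntegrable_const
            (fun t _ => ?_)
          rw [Finset.sum_comm]
          exact htask i t
      _ = τ μ.succ - τ μ.castSucc := by simp
  · -- per-processor constraint
    intro μ
    have hrw : (∑ i, ∑ q, w i q μ)
        = (∫ t in τ μ.castSucc..τ μ.succ, ∑ i, ∑ q, ∑ k, a i k q t)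
          / (τ μ.succ - τ μ.castSucc) := by
      rw [intervalIntegral.integral_finset_sum
        (fun i _ => aux_II_sum _ _ (fun q _ => hIIsum i q _ _))]
      rw [Finset.sum_div]
      refine Finset.sum_congr rfl fun i _ => ?_
      rw [intervalIntegral.integral_finset_sum (fun q _ => hIIsum i q _ _), hw,
        Finset.sum_div]
    rw [hrw, div_le_iff₀ (hΔ μ)]
    calc (∫ t in τ μ.castSucc..τ μ.succ, ∑ i, ∑ q, ∑ k, a i k q t)
        ≤ ∫ _t in τ μ.castSucc..τ μ.succ, (m:ℝ) := by
          refine intervalIntegral.integral_mono_on (hle μ)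
            (aux_II_sum _ _ (fun i _ => aux_II_sum _ _ (fun q _ => hIIsum i q _ _)))
            intervalIntegrable_const (fun t _ => ?_)
          calc (∑ i, ∑ q, ∑ k, a i k q t)
              = ∑ i, ∑ k, ∑ q, a i k q t :=
                Finset.sum_congr rfl fun i _ => Finset.sum_comm
            _ = ∑ k, ∑ i, ∑ q, a i k q t := Finset.sum_comm
            _ ≤ ∑ _k : Fin m, (1:ℝ) := Finset.sum_le_sum fun k _ => hproc k t
            _ = m := by simp
      _ = (m:ℝ) * (τ μ.succ - τ μ.castSucc) := by
          rw [intervalIntegral.integral_const, smul_eq_mul]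
          ring
  · -- bounds on w
    intro i q μ
    constructor
    · exact div_nonneg (intervalIntegral.integral_nonneg (hle μ)
        (fun t _ => Finset.sum_nonneg fun k _ => hnn i k q t)) (hΔ μ).le
    · rw [hw]
      rw [div_le_one (hΔ μ)]
      calc (∫ t in τ μ.castSucc..τ μ.succ, ∑ k, a i k q t)
          ≤ ∫ _t in τ μ.castSucc..τ μ.succ, (1:ℝ) := by
            refine intervalIntegral.integral_mono_on (hle μ) (hIIsum i q _ _)
              intervalIntegrable_const (fun t _ => ?_)
            calc (∑ k, a i k q t) ≤ ∑ k, ∑ q', a i k q' t :=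
                  Finset.sum_le_sum fun k _ =>
                    Finset.single_le_sum (fun q' _ => hnn i k q' t) (Finset.mem_univ q)
              _ ≤ 1 := htask i t
        _ = τ μ.succ - τ μ.castSucc := by simp
  · -- value identity
    have hHm : Measurable (fun t => ∑ i, ∑ k, ∑ q, a i k q t * c q) := by
      apply Finset.measurable_sum; intro i _
      apply Finset.measurable_sum; intro k _
      apply Finset.measurable_sum; intro q _
      exact (hmeas i k q).mul_const _
    have hHb : ∀ t, |∑ i, ∑ k, ∑ q, a i k q t * c q|
        ≤ ∑ _i : Fin n, ∑ _k : Fin m, ∑ q, |c q| := by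
      intro t
      refine (Finset.abs_sum_le_sum_abs _ _).trans (Finset.sum_le_sum fun i _ => ?_)
      refine (Finset.abs_sum_le_sum_abs _ _).trans (Finset.sum_le_sum fun k _ => ?_)
      refine (Finset.abs_sum_le_sum_abs _ _).trans (Finset.sum_le_sum fun q _ => ?_)
      rw [abs_mul]
      nlinarith [abs_nonneg (c q), habs i k q t, abs_nonneg (a i k q t)]
    have hHI : ∀ u v', IntervalIntegrable (fun t => ∑ i, ∑ k, ∑ q, a i k q t * c q)
        volume u v' := fun u v' => aux_II _ hHm _ hHb u v'
    have hfull := aux_grid τ _ hHI 0 (Fin.last N) (by simp)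
    have hfilter : Finset.univ.filter (fun μ : Fin N =>
        ((0 : Fin (N+1)):ℕ) ≤ (μ:ℕ) ∧ (μ:ℕ) < ((Fin.last N : Fin (N+1)):ℕ)) = Finset.univ :=
      Finset.filter_true_of_mem (fun μ _ => ⟨by simp, by simpa using μ.isLt⟩)
    rw [hfilter] at hfull
    rw [hval, ← hfull]
    refine Finset.sum_congr rfl fun μ _ => ?_
    have hpt : ∀ t, (∑ i, ∑ k, ∑ q, a i k q t * c q)
        = ∑ i, ∑ q, c q * ∑ k, a i k q t := by
      intro t
      refine Finset.sum_congr rfl fun i _ => ?_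
      rw [Finset.sum_comm]
      refine Finset.sum_congr rfl fun q _ => ?_
      rw [Finset.mul_sum]
      exact Finset.sum_congr rfl fun k _ => mul_comm _ _
    rw [intervalIntegral.integral_congr (fun t _ => hpt t)]
    rw [intervalIntegral.integral_finset_sum
      (fun i _ => aux_II_sum _ _ (fun q _ => (hIIsum i q _ _).const_mul (c q)))]
    refine Finset.sum_congr rfl fun i _ => ?_
    rw [intervalIntegral.integral_finset_sum (fun q _ => (hIIsum i q _ _).const_mul (c q))]
    refine Finset.sum_congr rfl fun q _ => ?_
    rw [intervalIntegral.integral_const_mul, hint_q i q μ]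
    ring

theorem dirB {N n m ℓ : ℕ} {τ : Fin (N + 1) → ℝ} (hτ : StrictMono τ)
    {s : Fin ℓ → ℝ} (hs : ∀ q, 0 < s q)
    {c : Fin ℓ → ℝ} (hc : ∀ q, 0 < c q)
    {xbar : Fin n → ℝ}
    {b e : Fin n → Fin (N + 1)} (hbe : ∀ i, (b i : ℕ) < e i)
    {v : ℝ}
    (h : ∃ (ξ : Fin n → Fin (N + 1) → ℝ) (w : Fin n → Fin ℓ → Fin N → ℝ),
      (∀ i, ξ i (b i) = xbar i) ∧
      (∀ i (μ : Fin (N + 1)), ¬((b i : ℕ) ≤ μ ∧ (μ : ℕ) < e i) → ξ i μ = 0) ∧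
      (∀ i (μ : Fin N), (b i : ℕ) ≤ μ → (μ : ℕ) < e i →
        ξ i μ.succ = ξ i μ.castSucc - (τ μ.succ - τ μ.castSucc) * ∑ q, s q * w i q μ) ∧
      (∀ i (μ : Fin N), (∑ q, w i q μ) ≤ 1) ∧
      (∀ μ : Fin N, (∑ i, ∑ q, w i q μ) ≤ (m : ℝ)) ∧
      (∀ i q (μ : Fin N), 0 ≤ w i q μ ∧ w i q μ ≤ 1) ∧
      v = ∑ μ : Fin N, ∑ i, ∑ q, (τ μ.succ - τ μ.castSucc) * w i q μ * c q) :
    ∃ v', (∃ (a : Fin n → Fin m → Fin ℓ → ℝ → ℝ) (x : Fin n → ℝ → ℝ),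
      (∀ i k q, Measurable (a i k q)) ∧
      (∀ i k q t, a i k q t = 0 ∨ a i k q t = 1) ∧
      (∀ i k q t, (t < τ (b i) ∨ τ (e i) ≤ t) → a i k q t = 0) ∧
      (∀ i t, (∑ k, ∑ q, a i k q t) ≤ 1) ∧
      (∀ k t, (∑ i, ∑ q, a i k q t) ≤ 1) ∧
      (∀ i, IntervalIntegrable (fun u => ∑ k, ∑ q, s q * a i k q u) volume
        (τ (b i)) (τ (e i))) ∧
      (∀ i t, x i t = xbar i - ∫ u in τ (b i)..t, ∑ k, ∑ q, s q * a i k q u) ∧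
      (∀ i, x i (τ (e i)) = 0) ∧
      IntervalIntegrable (fun t => ∑ i, ∑ k, ∑ q, a i k q t * c q) volume
        (τ 0) (τ (Fin.last N)) ∧
      v' = ∫ t in (τ 0)..(τ (Fin.last N)), ∑ i, ∑ k, ∑ q, a i k q t * c q) ∧ v' ≤ v := by
  obtain ⟨ξ, w, hξb, hξout, hrec, htaskw, hprocw, hbnd, hval⟩ := h
  set Δ : Fin N → ℝ := fun μ => τ μ.succ - τ μ.castSucc with hΔdef
  have hΔpos : ∀ μ, 0 < Δ μ := fun μ => sub_pos.2 (hτ Fin.castSucc_lt_succ)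
  set w' : Fin n → Fin ℓ → Fin N → ℝ := fun i q μ =>
    if (b i : ℕ) ≤ (μ:ℕ) ∧ (μ:ℕ) < (e i:ℕ) then w i q μ else 0 with hw'def
  have hw'0 : ∀ i q μ, 0 ≤ w' i q μ := by
    intro i q μ; rw [hw'def]; dsimp only; split_ifs; exacts [(hbnd i q μ).1, le_refl 0]
  have hw'le : ∀ i q μ, w' i q μ ≤ w i q μ := by
    intro i q μ; rw [hw'def]; dsimp only; split_ifs; exacts [le_refl _, (hbnd i q μ).1]
  set dd : Fin N → Fin n → Fin ℓ → ℝ := fun μ i q => Δ μ * w' i q μ with hdddef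
  have hd0 : ∀ μ (i : Fin n) (q : Fin ℓ), 0 ≤ dd μ i q :=
    fun μ i q => mul_nonneg (hΔpos μ).le (hw'0 i q μ)
  have hDle : ∀ (i : Fin n) μ, (∑ q, dd μ i q) ≤ Δ μ := by
    intro i μ
    rw [hdddef]
    dsimp only
    rw [← Finset.mul_sum]
    calc Δ μ * ∑ q, w' i q μ ≤ Δ μ * 1 := by
          refine mul_le_mul_of_nonneg_left ?_ (hΔpos μ).le
          exact (Finset.sum_le_sum fun q _ => hw'le i q μ).trans (htaskw i μ)
      _ = Δ μ := mul_one _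
  have htot : ∀ μ, (∑ i, ∑ q, dd μ i q) ≤ (m:ℝ) * Δ μ := by
    intro μ
    rw [hdddef]
    dsimp only
    calc (∑ i, ∑ q, Δ μ * w' i q μ) = Δ μ * ∑ i, ∑ q, w' i q μ := by
          rw [Finset.mul_sum]; exact Finset.sum_congr rfl fun i _ => (Finset.mul_sum _ _ _).symm
      _ ≤ Δ μ * (m:ℝ) := by
          refine mul_le_mul_of_nonneg_left ?_ (hΔpos μ).le
          exact (Finset.sum_le_sum fun i _ => Finset.sum_le_sum fun q _ => hw'le i q μ).trans
            (hprocw μ)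
      _ = (m:ℝ) * Δ μ := mul_comm _ _
  set SS : Fin N → Fin n → Fin ℓ → ℝ := fun μ => Scum (dd μ) with hSSdef
  set L : Fin n → Fin m → Fin ℓ → Fin N → ℝ := fun i k q μ =>
    max (τ μ.castSucc) (τ μ.castSucc + SS μ i q - (k:ℕ) * Δ μ) with hLdef
  set R : Fin n → Fin m → Fin ℓ → Fin N → ℝ := fun i k q μ =>
    min (τ μ.succ) (τ μ.castSucc + SS μ i q + dd μ i q - (k:ℕ) * Δ μ) with hRdef
  set a : Fin n → Fin m → Fin ℓ → ℝ → ℝ := fun i k q t =>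
    ∑ μ, (Set.Ico (L i k q μ) (R i k q μ)).indicator (fun _ => (1:ℝ)) t with hadef
  have hLR_sub : ∀ i k q μ, Set.Ico (L i k q μ) (R i k q μ)
      ⊆ Set.Ico (τ μ.castSucc) (τ μ.succ) :=
    fun i k q μ => Set.Ico_subset_Ico (le_max_left _ _) (min_le_left _ _)
  have hτdisj : ∀ (μ μ' : Fin N), μ ≠ μ' → ∀ t, t ∈ Set.Ico (τ μ.castSucc) (τ μ.succ) →
      t ∈ Set.Ico (τ μ'.castSucc) (τ μ'.succ) → False := by
    intro μ μ' hne t ht ht'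
    rcases Fin.lt_or_lt_of_ne hne with hlt | hlt
    · have : τ μ.succ ≤ τ μ'.castSucc :=
        hτ.monotone (by rw [Fin.le_def]; simpa [Fin.val_succ] using hlt)
      exact absurd (ht.2.trans_le (this.trans ht'.1)) (lt_irrefl t)
    · have : τ μ'.succ ≤ τ μ.castSucc :=
        hτ.monotone (by rw [Fin.le_def]; simpa [Fin.val_succ] using hlt)
      exact absurd (ht'.2.trans_le (this.trans ht.1)) (lt_irrefl t)
  have hind01 : ∀ (A B t : ℝ), (Set.Ico A B).indicator (fun _ => (1:ℝ)) t = 0 ∨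
      (Set.Ico A B).indicator (fun _ => (1:ℝ)) t = 1 := by
    intro A B t
    by_cases hmem : t ∈ Set.Ico A B
    · right; rw [Set.indicator_of_mem hmem]
    · left; rw [Set.indicator_of_notMem hmem]
  have hindne : ∀ (A B t : ℝ), (Set.Ico A B).indicator (fun _ => (1:ℝ)) t ≠ 0 →
      t ∈ Set.Ico A B := by
    intro A B t hne
    by_contra hmem
    exact hne (Set.indicator_of_notMem hmem _)
  -- binary
  have hbin : ∀ i k q t, a i k q t = 0 ∨ a i k q t = 1 := by
    intro i k q t
    simp only [hadef]
    refine aux_sum_binary _ (fun μ => hind01 _ _ t) (fun μ μ' hne => ?_)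
    by_contra hcon
    push_neg at hcon
    exact hτdisj μ μ' hne t (hLR_sub i k q μ (hindne _ _ t hcon.1))
      (hLR_sub i k q μ' (hindne _ _ t hcon.2))
  -- membership data
  have hmemdata : ∀ i (k : Fin m) q μ (t : ℝ), t ∈ Set.Ico (L i k q μ) (R i k q μ) →
      SS μ i q ≤ (t - τ μ.castSucc) + (k:ℕ) * Δ μ ∧
      (t - τ μ.castSucc) + (k:ℕ) * Δ μ < SS μ i q + dd μ i q := by
    intro i k q μ t ht
    obtain ⟨h1, h2⟩ := ht
    simp only [hLdef] at h1
    simp only [hRdef] at h2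
    constructor
    · have := (le_max_right _ _).trans h1
      linarith
    · have := h2.trans_le (min_le_right _ _)
      linarith
  -- existence of an interval when a = 1
  have hone : ∀ i k q (t : ℝ), a i k q t = 1 →
      ∃ μ, t ∈ Set.Ico (L i k q μ) (R i k q μ) := by
    intro i k q t h1
    simp only [hadef] at h1
    have : ∑ μ, (Set.Ico (L i k q μ) (R i k q μ)).indicator (fun _ => (1:ℝ)) t ≠ 0 := by
      rw [h1]; norm_num
    obtain ⟨μ, _, hμ⟩ := Finset.exists_ne_zero_of_sum_ne_zero this
    exact ⟨μ, hindne _ _ t hμ⟩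
  -- support
  have hactive : ∀ i k q (μ : Fin N), (¬((b i : ℕ) ≤ (μ:ℕ) ∧ (μ:ℕ) < (e i:ℕ))) →
      Set.Ico (L i k q μ) (R i k q μ) = ∅ := by
    intro i k q μ hact
    have hd : dd μ i q = 0 := by
      simp only [hdddef, hw'def, if_neg hact, mul_zero]
    refine Set.Ico_eq_empty (fun hlt => ?_)
    simp only [hLdef, hRdef] at hlt
    have h1 := (min_le_right _ _).trans_lt' hlt
    have h2 := le_max_right (τ μ.castSucc) (τ μ.castSucc + SS μ i q - (k:ℕ) * Δ μ)
    rw [hd] at h1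
    linarith [lt_of_le_of_lt h2 h1]
  have hsupp : ∀ i k q (t : ℝ), (t < τ (b i) ∨ τ (e i) ≤ t) → a i k q t = 0 := by
    intro i k q t hts
    simp only [hadef]
    refine Finset.sum_eq_zero fun μ _ => ?_
    by_cases hact : (b i : ℕ) ≤ (μ:ℕ) ∧ (μ:ℕ) < (e i:ℕ)
    · refine Set.indicator_of_notMem (fun hmem => ?_) _
      have hsub := hLR_sub i k q μ hmem
      have hb' : τ (b i) ≤ τ μ.castSucc := hτ.monotone (by rw [Fin.le_def]; exact hact.1)
      have he' : τ μ.succ ≤ τ (e i) :=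
        hτ.monotone (by rw [Fin.le_def]; simpa [Fin.val_succ] using hact.2)
      rcases hts with hts | hts
      · exact absurd (hts.trans_le (hb'.trans hsub.1)) (lt_irrefl t)
      · exact absurd ((hsub.2.trans_le he').trans_le hts) (lt_irrefl t)
    · rw [hactive i k q μ hact]
      simp
  -- per-processor exclusivity
  have hproc : ∀ (k : Fin m) (t : ℝ), (∑ i, ∑ q, a i k q t) ≤ 1 := by
    intro k t
    rw [← Fintype.sum_prod_type']
    refine aux_sum_binary_le_one _ (fun p => hbin p.1 k p.2 t) (fun p p' hne => ?_)
    by_contra hcon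
    push_neg at hcon
    have h1 : a p.1 k p.2 t = 1 := (hbin p.1 k p.2 t).resolve_left hcon.1
    have h2 : a p'.1 k p'.2 t = 1 := (hbin p'.1 k p'.2 t).resolve_left hcon.2
    obtain ⟨μ, hμ⟩ := hone _ _ _ _ h1
    obtain ⟨μ', hμ'⟩ := hone _ _ _ _ h2
    have hμμ : μ = μ' := by
      by_contra hne'
      exact hτdisj μ μ' hne' t (hLR_sub _ _ _ _ hμ) (hLR_sub _ _ _ _ hμ')
    subst hμμ
    obtain ⟨ha1, ha2⟩ := hmemdata _ _ _ _ _ hμ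
    obtain ⟨ha3, ha4⟩ := hmemdata _ _ _ _ _ hμ'
    refine Scum_disjoint (dd μ) (fun hpp => hne (Prod.ext hpp.1 hpp.2)) (hd0 μ) ha1 ha2 ha3 ha4
  -- per-task exclusivity
  have htask : ∀ (i : Fin n) (t : ℝ), (∑ k, ∑ q, a i k q t) ≤ 1 := by
    intro i t
    rw [← Fintype.sum_prod_type']
    refine aux_sum_binary_le_one _ (fun p => hbin i p.1 p.2 t) (fun p p' hne => ?_)
    by_contra hcon
    push_neg at hcon
    have h1 : a i p.1 p.2 t = 1 := (hbin i p.1 p.2 t).resolve_left hcon.1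
    have h2 : a i p'.1 p'.2 t = 1 := (hbin i p'.1 p'.2 t).resolve_left hcon.2
    obtain ⟨μ, hμ⟩ := hone _ _ _ _ h1
    obtain ⟨μ', hμ'⟩ := hone _ _ _ _ h2
    have hμμ : μ = μ' := by
      by_contra hne'
      exact hτdisj μ μ' hne' t (hLR_sub _ _ _ _ hμ) (hLR_sub _ _ _ _ hμ')
    subst hμμ
    obtain ⟨ha1, ha2⟩ := hmemdata _ _ _ _ _ hμ
    obtain ⟨ha3, ha4⟩ := hmemdata _ _ _ _ _ hμ'
    by_cases hkk : p.1 = p'.1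
    · rw [hkk] at ha1 ha2
      refine Scum_disjoint (dd μ) (fun hpp => hne (Prod.ext hkk hpp.2)) (hd0 μ) ha1 ha2 ha3 ha4
    · -- different processors: task block has width ≤ Δ μ
      set g : ℝ := t - τ μ.castSucc with hgdef
      have hT1 : Tcum (dd μ) i ≤ SS μ i p.2 := Tcum_le_Scum _ _ _ (hd0 μ)
      have hT2 : SS μ i p.2 + dd μ i p.2 ≤ Tcum (dd μ) i + ∑ q', dd μ i q' :=
        Scum_add_le _ _ _ (hd0 μ)
      have hT3 : Tcum (dd μ) i ≤ SS μ i p'.2 := Tcum_le_Scum _ _ _ (hd0 μ)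
      have hT4 : SS μ i p'.2 + dd μ i p'.2 ≤ Tcum (dd μ) i + ∑ q', dd μ i q' :=
        Scum_add_le _ _ _ (hd0 μ)
      have hDΔ : (∑ q', dd μ i q') ≤ Δ μ := hDle i μ
      rcases Fin.lt_or_lt_of_ne hkk with hlt | hlt
      · have hcast : ((p.1 : ℕ) : ℝ) + 1 ≤ ((p'.1 : ℕ) : ℝ) := by exact_mod_cast hlt
        nlinarith [hΔpos μ]
      · have hcast : ((p'.1 : ℕ) : ℝ) + 1 ≤ ((p.1 : ℕ) : ℝ) := by exact_mod_cast hlt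
        nlinarith [hΔpos μ]
  -- measurability
  have hmeas : ∀ i k q, Measurable (a i k q) := by
    intro i k q
    simp only [hadef]
    apply Finset.measurable_sum
    intro μ _
    exact (measurable_const.indicator measurableSet_Ico)
  -- stage 2
  have hle : ∀ μ : Fin N, τ μ.castSucc ≤ τ μ.succ := fun μ => by
    have := hΔpos μ; rw [hΔdef] at this; dsimp only at this; linarith
  have habs : ∀ i k q (t : ℝ), |a i k q t| ≤ 1 := by
    intro i k q t
    rcases hbin i k q t with h0 | h0 <;> rw [h0] <;> norm_num
  have hIIa : ∀ i k q (u v' : ℝ), IntervalIntegrable (a i k q) volume u v' :=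
    fun i k q u v' => aux_II _ (hmeas i k q) 1 (habs i k q) u v'
  -- integral of a over one grid interval
  have hints : ∀ i k q (μ : Fin N), (∫ t in τ μ.castSucc..τ μ.succ, a i k q t)
      = max 0 (R i k q μ - L i k q μ) := by
    intro i k q μ
    have hstep : (∫ t in τ μ.castSucc..τ μ.succ, a i k q t)
        = ∑ μ' : Fin N, max 0 (min (R i k q μ') (τ μ.succ) - max (L i k q μ') (τ μ.castSucc)) := by
      simp only [hadef]
      rw [intervalIntegral.integral_finset_sum (fun μ' _ =>
        aux_II _ (measurable_const.indicator measurableSet_Ico) 1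
          (fun t => by
            rcases hind01 (L i k q μ') (R i k q μ') t with h0 | h0 <;> rw [h0] <;> norm_num)
          _ _)]
      exact Finset.sum_congr rfl fun μ' _ => aux_ind _ _ _ _ (hle μ)
    rw [hstep]
    rw [Finset.sum_eq_single_of_mem μ (Finset.mem_univ μ) ?side]
    · congr 1
      rw [min_eq_left, max_eq_left]
      · exact le_max_left _ _ |>.trans (le_refl _) |>.trans' (le_refl _) |>.trans (le_refl _)
      · exact min_le_left _ _
    case side =>
      intro μ' _ hne
      have h0 : min (R i k q μ') (τ μ.succ) - max (L i k q μ') (τ μ.castSucc) ≤ 0 := by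
        rcases Fin.lt_or_lt_of_ne hne with hlt | hlt
        · have hττ : τ μ'.succ ≤ τ μ.castSucc :=
            hτ.monotone (by rw [Fin.le_def]; simpa [Fin.val_succ] using hlt)
          have h1 : R i k q μ' ≤ τ μ'.succ := by simp only [hRdef]; exact min_le_left _ _
          have h2 : τ μ.castSucc ≤ max (L i k q μ') (τ μ.castSucc) := le_max_right _ _
          have h3 : min (R i k q μ') (τ μ.succ) ≤ R i k q μ' := min_le_left _ _
          linarith
        · have hττ : τ μ.succ ≤ τ μ'.castSucc :=
            hτ.monotone (by rw [Fin.le_def]; simpa [Fin.val_succ] using hlt)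
          have h1 : τ μ'.castSucc ≤ L i k q μ' := by simp only [hLdef]; exact le_max_left _ _
          have h2 : L i k q μ' ≤ max (L i k q μ') (τ μ.castSucc) := le_max_left _ _
          have h3 : min (R i k q μ') (τ μ.succ) ≤ τ μ.succ := min_le_right _ _
          linarith
      rw [max_eq_left h0]
  -- sum over processors of integral = assigned duration
  have hsumk : ∀ i q (μ : Fin N), (∑ k : Fin m, ∫ t in τ μ.castSucc..τ μ.succ, a i k q t)
      = dd μ i q := by
    intro i q μ
    have hA0 : 0 ≤ SS μ i q := Scum_nonneg _ (hd0 μ) i q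
    have hAB : SS μ i q ≤ SS μ i q + dd μ i q := le_add_of_nonneg_right (hd0 μ i q)
    have hB : SS μ i q + dd μ i q ≤ (m:ℝ) * Δ μ :=
      (Scum_add_le_total (dd μ) i q (hd0 μ)).trans (htot μ)
    have hkk : ∀ k : Fin m, max 0 (R i k q μ - L i k q μ)
        = max 0 (min (SS μ i q + dd μ i q) ((k + 1 : ℕ) * Δ μ)
            - max (SS μ i q) ((k : ℕ) * Δ μ)) := by
      intro k
      have hτs : τ μ.succ = τ μ.castSucc + Δ μ := by rw [hΔdef]; ring
      have hLr : L i k q μ = max (τ μ.castSucc)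
          (τ μ.castSucc + SS μ i q - ((k:ℕ):ℝ) * Δ μ) := by simp only [hLdef]
      have hRr : R i k q μ = min (τ μ.castSucc + Δ μ)
          (τ μ.castSucc + (SS μ i q + dd μ i q) - ((k:ℕ):ℝ) * Δ μ) := by
        simp only [hRdef]
        rw [hτs]
        ring_nf
      rw [hLr, hRr, aux_shift (τ μ.castSucc) (Δ μ) (SS μ i q) (SS μ i q + dd μ i q)
        (((k:ℕ):ℝ) * Δ μ)]
      congr 2
      push_cast
      ring
    calc (∑ k : Fin m, ∫ t in τ μ.castSucc..τ μ.succ, a i k q t)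
        = ∑ k : Fin m, max 0 (min (SS μ i q + dd μ i q) ((k + 1 : ℕ) * Δ μ)
            - max (SS μ i q) ((k : ℕ) * Δ μ)) := by
          refine Finset.sum_congr rfl fun k _ => ?_
          rw [hints i k q μ, hkk k]
      _ = (SS μ i q + dd μ i q) - SS μ i q :=
          aux_sum_pieces m (Δ μ) (SS μ i q) (SS μ i q + dd μ i q) (hΔpos μ).le hA0 hAB hB
      _ = dd μ i q := by ring
  -- work done on each interval
  have hwork : ∀ i (μ : Fin N), (∫ t in τ μ.castSucc..τ μ.succ, ∑ k, ∑ q, s q * a i k q t)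
      = Δ μ * ∑ q, s q * w' i q μ := by
    intro i μ
    rw [intervalIntegral.integral_finset_sum (fun k _ =>
      aux_II_sum _ _ (fun q _ => (hIIa i k q _ _).const_mul (s q)))]
    have : ∀ k : Fin m, (∫ t in τ μ.castSucc..τ μ.succ, ∑ q, s q * a i k q t)
        = ∑ q, s q * ∫ t in τ μ.castSucc..τ μ.succ, a i k q t := by
      intro k
      rw [intervalIntegral.integral_finset_sum (fun q _ => (hIIa i k q _ _).const_mul (s q))]
      exact Finset.sum_congr rfl fun q _ => intervalIntegral.integral_const_mul _ _
    rw [Finset.sum_congr rfl (fun k _ => this k), Finset.sum_comm]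
    calc (∑ q, ∑ k : Fin m, s q * ∫ t in τ μ.castSucc..τ μ.succ, a i k q t)
        = ∑ q, s q * dd μ i q := by
          refine Finset.sum_congr rfl fun q _ => ?_
          rw [← Finset.mul_sum, hsumk i q μ]
      _ = Δ μ * ∑ q, s q * w' i q μ := by
          rw [Finset.mul_sum]
          refine Finset.sum_congr rfl fun q _ => ?_
          rw [hdddef]
          ring
  -- cost on each interval
  have hcost : ∀ μ : Fin N, (∫ t in τ μ.castSucc..τ μ.succ, ∑ i, ∑ k, ∑ q, a i k q t * c q)
      = ∑ i, ∑ q, Δ μ * w' i q μ * c q := by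
    intro μ
    rw [intervalIntegral.integral_finset_sum (fun i _ =>
      aux_II_sum _ _ (fun k _ => aux_II_sum _ _ (fun q _ => (hIIa i k q _ _).mul_const (c q))))]
    refine Finset.sum_congr rfl fun i _ => ?_
    rw [intervalIntegral.integral_finset_sum (fun k _ =>
      aux_II_sum _ _ (fun q _ => (hIIa i k q _ _).mul_const (c q)))]
    have : ∀ k : Fin m, (∫ t in τ μ.castSucc..τ μ.succ, ∑ q, a i k q t * c q)
        = ∑ q, c q * ∫ t in τ μ.castSucc..τ μ.succ, a i k q t := by
      intro k
      rw [intervalIntegral.integral_finset_sum (fun q _ => (hIIa i k q _ _).mul_const (c q))]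
      refine Finset.sum_congr rfl fun q _ => ?_
      rw [← intervalIntegral.integral_const_mul]
      exact intervalIntegral.integral_congr fun t _ => mul_comm _ _
    rw [Finset.sum_congr rfl (fun k _ => this k), Finset.sum_comm]
    refine Finset.sum_congr rfl fun q _ => ?_
    rw [← Finset.mul_sum, hsumk i q μ, hdddef]
    ring
  -- telescoping of the LP dynamics
  have htel : ∀ i : Fin n,
      (∑ μ ∈ Finset.univ.filter (fun μ : Fin N => (b i:ℕ) ≤ (μ:ℕ) ∧ (μ:ℕ) < (e i:ℕ)),
        Δ μ * ∑ q, s q * w i q μ) = xbar i := by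
    intro i
    have hbN : (b i : ℕ) ≤ N := Nat.lt_succ_iff.mp (b i).isLt
    have heN : (e i : ℕ) ≤ N := Nat.lt_succ_iff.mp (e i).isLt
    have key : ∀ j : ℕ, (b i:ℕ) ≤ j → j ≤ (e i:ℕ) →
        (∑ μ ∈ Finset.univ.filter (fun μ : Fin N => (b i:ℕ) ≤ (μ:ℕ) ∧ (μ:ℕ) < j),
          Δ μ * ∑ q, s q * w i q μ)
        = xbar i - ξ i ⟨min j N, Nat.lt_succ_of_le (min_le_right _ _)⟩ := by
      intro j hbj
      induction j, hbj using Nat.le_induction with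
      | base =>
        intro _
        have hempty : (Finset.univ.filter
            (fun μ : Fin N => (b i:ℕ) ≤ (μ:ℕ) ∧ (μ:ℕ) < (b i:ℕ))) = ∅ := by
          refine Finset.filter_false_of_mem (fun μ _ => ?_)
          omega
        rw [hempty, Finset.sum_empty]
        have : (⟨min (b i:ℕ) N, Nat.lt_succ_of_le (min_le_right _ _)⟩ : Fin (N+1)) = b i :=
          Fin.ext (by simp [min_eq_left hbN])
        rw [this, hξb i]
        ring
      | succ j hbj IH =>
        intro hje
        have hjN : j < N := by omega
        set μj : Fin N := ⟨j, hjN⟩ with hμj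
        have hfil : (Finset.univ.filter
            (fun μ : Fin N => (b i:ℕ) ≤ (μ:ℕ) ∧ (μ:ℕ) < j + 1))
            = insert μj (Finset.univ.filter
              (fun μ : Fin N => (b i:ℕ) ≤ (μ:ℕ) ∧ (μ:ℕ) < j)) := by
          ext μ
          simp only [Finset.mem_filter, Finset.mem_univ, true_and, Finset.mem_insert,
            Fin.ext_iff, hμj]
          omega
        have hnotmem : μj ∉ (Finset.univ.filter
            (fun μ : Fin N => (b i:ℕ) ≤ (μ:ℕ) ∧ (μ:ℕ) < j)) := by
          simp [hμj]
        rw [hfil, Finset.sum_insert hnotmem, IH (by omega)]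
        have hrecj := hrec i μj (by simpa [hμj] using hbj) (by simp only [hμj]; omega)
        have hc1 : (⟨min j N, Nat.lt_succ_of_le (min_le_right _ _)⟩ : Fin (N+1))
            = μj.castSucc := Fin.ext (by simp [hμj, min_eq_left hjN.le])
        have hc2 : (⟨min (j+1) N, Nat.lt_succ_of_le (min_le_right _ _)⟩ : Fin (N+1))
            = μj.succ := Fin.ext (by simp [hμj, min_eq_left (Nat.succ_le_of_lt hjN)])
        rw [hc1] at *
        rw [hc2, hrecj, hΔdef]
        dsimp only
        ring
    have hfin := key (e i:ℕ) (hbe i).le (le_refl _)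
    have heq : (⟨min (e i:ℕ) N, Nat.lt_succ_of_le (min_le_right _ _)⟩ : Fin (N+1)) = e i :=
      Fin.ext (by simp [min_eq_left heN])
    rw [heq] at hfin
    rw [hfin, hξout i (e i) (by omega)]
    ring
  -- definition of state trajectory
  set x : Fin n → ℝ → ℝ := fun i t =>
    xbar i - ∫ u in τ (b i)..t, ∑ k, ∑ q, s q * a i k q u with hxdef
  have hGI : ∀ i (u v' : ℝ),
      IntervalIntegrable (fun t => ∑ k, ∑ q, s q * a i k q t) volume u v' :=
    fun i u v' => aux_II_sum _ _ (fun k _ =>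
      aux_II_sum _ _ (fun q _ => (hIIa i k q _ _).const_mul (s q)))
  have hxe : ∀ i, x i (τ (e i)) = 0 := by
    intro i
    rw [hxdef]
    dsimp only
    rw [← aux_grid τ _ (hGI i) (b i) (e i) (hbe i).le]
    have hwin : ∀ μ ∈ Finset.univ.filter
        (fun μ : Fin N => (b i:ℕ) ≤ (μ:ℕ) ∧ (μ:ℕ) < (e i:ℕ)),
        (∫ t in τ μ.castSucc..τ μ.succ, ∑ k, ∑ q, s q * a i k q t)
        = Δ μ * ∑ q, s q * w i q μ := by
      intro μ hμ
      simp only [Finset.mem_filter, Finset.mem_univ, true_and] at hμ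
      rw [hwork i μ]
      congr 1
      refine Finset.sum_congr rfl fun q _ => ?_
      rw [hw'def]
      dsimp only
      rw [if_pos hμ]
    rw [Finset.sum_congr rfl hwin, htel i]
    ring
  -- cost integrand integrable
  have hHI : ∀ (u v' : ℝ),
      IntervalIntegrable (fun t => ∑ i, ∑ k, ∑ q, a i k q t * c q) volume u v' :=
    fun u v' => aux_II_sum _ _ (fun i _ => aux_II_sum _ _ (fun k _ =>
      aux_II_sum _ _ (fun q _ => (hIIa i k q _ _).mul_const (c q))))
  -- value
  have hvalue : (∫ t in (τ 0)..(τ (Fin.last N)), ∑ i, ∑ k, ∑ q, a i k q t * c q)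
      = ∑ μ : Fin N, ∑ i, ∑ q, Δ μ * w' i q μ * c q := by
    have hfull := aux_grid τ _ hHI 0 (Fin.last N) (by simp)
    have hfilter : Finset.univ.filter (fun μ : Fin N =>
        ((0 : Fin (N+1)):ℕ) ≤ (μ:ℕ) ∧ (μ:ℕ) < ((Fin.last N : Fin (N+1)):ℕ)) = Finset.univ :=
      Finset.filter_true_of_mem (fun μ _ => ⟨by simp, by simpa using μ.isLt⟩)
    rw [hfilter] at hfull
    rw [← hfull]
    exact Finset.sum_congr rfl fun μ _ => hcost μ
  refine ⟨∑ μ : Fin N, ∑ i, ∑ q, Δ μ * w' i q μ * c q,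
    ⟨a, x, hmeas, hbin, hsupp, htask, hproc, fun i => hGI i _ _, fun i t => rfl, hxe,
      hHI _ _, hvalue.symm⟩, ?_⟩
  rw [hval]
  refine Finset.sum_le_sum fun μ _ => Finset.sum_le_sum fun i _ => Finset.sum_le_sum fun q _ => ?_
  rw [hΔdef]
  dsimp only
  refine mul_le_mul_of_nonneg_right ?_ (hc q).le
  refine mul_le_mul_of_nonneg_left (hw'le i q μ) ?_
  have := hΔpos μ
  rw [hΔdef] at this
  exact this.le


/-- Equivalence of the continuous-time binary scheduling problem and the discrete-time
LP-DVFS workload partitioning problem: their optimal values coincide, provided the event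
times τ_0 < ... < τ_N include all arrival times τ_{b_i} and deadlines τ_{e_i}. -/
theorem stmt17 (N n m ℓ : ℕ) (τ : Fin (N + 1) → ℝ) (hτ : StrictMono τ)
    (s : Fin ℓ → ℝ) (hs : ∀ q, 0 < s q)
    (c : Fin ℓ → ℝ) (hc : ∀ q, 0 < c q)
    (xbar : Fin n → ℝ) (hxbar : ∀ i, 0 < xbar i)
    (b e : Fin n → Fin (N + 1)) (hbe : ∀ i, (b i : ℕ) < e i)
    (Vc VL : Set ℝ)
    (hVc : Vc = {v | ∃ (a : Fin n → Fin m → Fin ℓ → ℝ → ℝ) (x : Fin n → ℝ → ℝ),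
      (∀ i k q, Measurable (a i k q)) ∧
      (∀ i k q t, a i k q t = 0 ∨ a i k q t = 1) ∧
      (∀ i k q t, (t < τ (b i) ∨ τ (e i) ≤ t) → a i k q t = 0) ∧
      (∀ i t, (∑ k, ∑ q, a i k q t) ≤ 1) ∧
      (∀ k t, (∑ i, ∑ q, a i k q t) ≤ 1) ∧
      (∀ i, IntervalIntegrable (fun u => ∑ k, ∑ q, s q * a i k q u) volume
        (τ (b i)) (τ (e i))) ∧
      (∀ i t, x i t = xbar i - ∫ u in τ (b i)..t, ∑ k, ∑ q, s q * a i k q u) ∧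
      (∀ i, x i (τ (e i)) = 0) ∧
      IntervalIntegrable (fun t => ∑ i, ∑ k, ∑ q, a i k q t * c q) volume
        (τ 0) (τ (Fin.last N)) ∧
      v = ∫ t in (τ 0)..(τ (Fin.last N)), ∑ i, ∑ k, ∑ q, a i k q t * c q})
    (hVL : VL = {v | ∃ (ξ : Fin n → Fin (N + 1) → ℝ) (w : Fin n → Fin ℓ → Fin N → ℝ),
      (∀ i, ξ i (b i) = xbar i) ∧
      (∀ i (μ : Fin (N + 1)), ¬((b i : ℕ) ≤ μ ∧ (μ : ℕ) < e i) → ξ i μ = 0) ∧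
      (∀ i (μ : Fin N), (b i : ℕ) ≤ μ → (μ : ℕ) < e i →
        ξ i μ.succ = ξ i μ.castSucc - (τ μ.succ - τ μ.castSucc) * ∑ q, s q * w i q μ) ∧
      (∀ i (μ : Fin N), (∑ q, w i q μ) ≤ 1) ∧
      (∀ μ : Fin N, (∑ i, ∑ q, w i q μ) ≤ (m : ℝ)) ∧
      (∀ i q (μ : Fin N), 0 ≤ w i q μ ∧ w i q μ ≤ 1) ∧
      v = ∑ μ : Fin N, ∑ i, ∑ q, (τ μ.succ - τ μ.castSucc) * w i q μ * c q}) :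
    sInf Vc = sInf VL := by
  have hAsub : Vc ⊆ VL := by
    rw [hVc, hVL]
    intro v hv
    exact dirA hτ hs hbe hv
  have hB : ∀ v ∈ VL, ∃ v' ∈ Vc, v' ≤ v := by
    rw [hVc, hVL]
    intro v hv
    obtain ⟨v', hv', hle⟩ := dirB hτ hs hc hbe hv
    exact ⟨v', hv', hle⟩
  have hbddL : ∀ v ∈ VL, (0:ℝ) ≤ v := by
    rw [hVL]
    rintro v ⟨ξ, w, _, _, _, _, _, hbnd, hval⟩
    rw [hval]
    refine Finset.sum_nonneg fun μ _ => Finset.sum_nonneg fun i _ =>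
      Finset.sum_nonneg fun q _ => ?_
    have h1 : (0:ℝ) ≤ τ μ.succ - τ μ.castSucc :=
      (sub_pos.2 (hτ Fin.castSucc_lt_succ)).le
    exact mul_nonneg (mul_nonneg h1 (hbnd i q μ).1) (hc q).le
  have hbddC : ∀ v ∈ Vc, (0:ℝ) ≤ v := fun v hv => hbddL v (hAsub hv)
  by_cases hVLne : VL.Nonempty
  · obtain ⟨v0, hv0⟩ := hVLne
    obtain ⟨v0', hv0', _⟩ := hB v0 hv0
    apply le_antisymm
    · refine le_csInf ⟨v0, hv0⟩ (fun v hv => ?_)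
      obtain ⟨v', hv', hle⟩ := hB v hv
      exact (csInf_le ⟨0, fun y hy => hbddC y hy⟩ hv').trans hle
    · exact le_csInf ⟨v0', hv0'⟩ (fun v hv => csInf_le ⟨0, fun y hy => hbddL y hy⟩ (hAsub hv))
  · have hVL0 : VL = ∅ := Set.not_nonempty_iff_eq_empty.mp hVLne
    have hVc0 : Vc = ∅ := Set.eq_empty_of_subset_empty (hVL0 ▸ hAsub)
    rw [hVL0, hVc0]
end
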